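/- Let X_1, …, X_N be i.i.d. {0,1}-valued random variables with E[X_1] ≤ e^{−nβ}, where N = e^{nα}, β ≥ α > 0, and k a positive integer. Then E[(Σ_{i=1}^N X_i)^k] ≤ (k!)² k · e^{n(α−β)}. -/

import Mathlib

open Finset

lemma fact_eq_prod' (k : ℕ) : k.factorial = ∏ i ∈ range k, (i + 1) := by
  induction k with
  | zero => simp
  | succ n ih => rw [Finset.prod_range_succ, ← ih, Nat.factorial_succ, mul_comm]

lemma pow_self_le_factorial_sq (k : ℕ) : k ^ k ≤ (k.factorial) ^ 2 := by
  have h2 : k.factorial = ∏ i ∈ range k, (k - i) := by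
    rw [← Nat.descFactorial_self, Nat.descFactorial_eq_prod_range]
  calc k ^ k = ∏ _i ∈ range k, k := by rw [Finset.prod_const, card_range]
    _ ≤ ∏ i ∈ range k, (i + 1) * (k - i) := by
        apply Finset.prod_le_prod'
        intro i hi
        rw [mem_range] at hi
        have h1 : 1 ≤ k - i := by omega
        calc k = k - i + i := by omega
          _ ≤ (k - i) + i * (k - i) := by
              have : i * 1 ≤ i * (k - i) := Nat.mul_le_mul_left i h1
              omega
          _ = (i + 1) * (k - i) := by ring
    _ = (k.factorial) ^ 2 := by
        rw [sq, Finset.prod_mul_distrib, ← fact_eq_prod' k, ← h2]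

lemma pow_le_kk_mul_choose {m k : ℕ} (hk : k ≤ m) : m ^ k ≤ k ^ k * m.choose k := by
  have key : k.factorial * m ^ k ≤ k.factorial * (k ^ k * m.choose k) := by
    have h2 : k.factorial = ∏ i ∈ range k, (k - i) := by
      rw [← Nat.descFactorial_self, Nat.descFactorial_eq_prod_range]
    calc k.factorial * m ^ k = ∏ i ∈ range k, ((k - i) * m) := by
          rw [Finset.prod_mul_distrib, ← h2, Finset.prod_const, card_range]
      _ ≤ ∏ i ∈ range k, (k * (m - i)) := by
          apply Finset.prod_le_prod'
          intro i hi
          rw [mem_range] at hi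
          have h1 : i ≤ k := hi.le
          have h2' : i ≤ m := h1.trans hk
          zify [h1, h2']
          nlinarith [mul_nonneg (Int.ofNat_nonneg i) (sub_nonneg.mpr (Int.ofNat_le.mpr hk))]
      _ = k ^ k * m.descFactorial k := by
          rw [Finset.prod_mul_distrib, Finset.prod_const, card_range,
            Nat.descFactorial_eq_prod_range]
      _ = k.factorial * (k ^ k * m.choose k) := by
          rw [Nat.descFactorial_eq_factorial_mul_choose]; ring
  exact Nat.le_of_mul_le_mul_left key k.factorial_pos

lemma pow_le_sum_choose {m k : ℕ} (hk : 0 < k) :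
    m ^ k ≤ k ^ k * ∑ r ∈ Icc 1 k, m.choose r := by
  rcases Nat.eq_zero_or_pos m with hm | hm
  · subst hm; rw [Nat.zero_pow hk]; exact Nat.zero_le _
  rcases le_or_gt m k with hmk | hkm
  · have h1 : m.choose 1 ≤ ∑ r ∈ Icc 1 k, m.choose r :=
      Finset.single_le_sum (fun i _ => Nat.zero_le _) (by rw [Finset.mem_Icc]; omega)
    calc m ^ k ≤ k ^ k := Nat.pow_le_pow_left hmk k
      _ = k ^ k * 1 := by ring
      _ ≤ k ^ k * ∑ r ∈ Icc 1 k, m.choose r := by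
          apply Nat.mul_le_mul_left
          calc 1 ≤ m := hm
            _ = m.choose 1 := (Nat.choose_one_right m).symm
            _ ≤ _ := h1
  · have h1 : m.choose k ≤ ∑ r ∈ Icc 1 k, m.choose r :=
      Finset.single_le_sum (fun i _ => Nat.zero_le _) (by simp [hk]; omega)
    calc m ^ k ≤ k ^ k * m.choose k := pow_le_kk_mul_choose hkm.le
      _ ≤ k ^ k * ∑ r ∈ Icc 1 k, m.choose r := Nat.mul_le_mul_left _ h1

open MeasureTheory ProbabilityTheory

theorem binomial_pow_moment_le {Ω : Type*} [MeasurableSpace Ω]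
    (μ : Measure Ω) [IsProbabilityMeasure μ]
    (n : ℕ) (hn : 0 < n) (α β : ℝ) (hα : 0 < α) (hβ : α ≤ β)
    (k : ℕ) (hk : 0 < k) (p : ℝ)
    (N : ℕ) (hN : N = ⌊Real.exp (n * α)⌋₊)
    (X : Fin N → Ω → ℝ) (hmeas : ∀ i, Measurable (X i))
    (hval : ∀ i ω, X i ω = 0 ∨ X i ω = 1)
    (hindep : iIndepFun X μ)
    (hid : ∀ i, ∫ ω, X i ω ∂μ = p)
    (hmean : p ≤ Real.exp (-(n * β))) :
    ∫ ω, (∑ i, X i ω) ^ k ∂μ ≤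
      ((Nat.factorial k : ℝ)) ^ 2 * (k : ℝ) * Real.exp (n * (α - β)) := by
  classical
  have hN1 : 0 < N := by
    rw [hN]
    exact Nat.floor_pos.mpr (Real.one_le_exp (by positivity))
  set i0 : Fin N := ⟨0, hN1⟩ with hi0
  have hX01 : ∀ i ω, 0 ≤ X i ω ∧ X i ω ≤ 1 := by
    intro i ω; rcases hval i ω with h | h <;> simp [h]
  have hXint : ∀ i, Integrable (X i) μ := by
    intro i
    refine ⟨(hmeas i).aestronglyMeasurable, HasFiniteIntegral.of_bounded (C := 1) ?_⟩
    filter_upwards with ω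
    rw [Real.norm_eq_abs, abs_le]
    exact ⟨by linarith [(hX01 i ω).1], (hX01 i ω).2⟩
  have hp0 : 0 ≤ p := by
    rw [← hid i0]
    exact integral_nonneg fun ω => (hX01 i0 ω).1
  set P : Finset (Fin N) → Ω → ℝ := fun A ω => ∏ i ∈ A, X i ω with hP
  have hPval : ∀ A ω, P A ω = 0 ∨ P A ω = 1 := by
    intro A ω
    by_cases h : ∀ i ∈ A, X i ω = 1
    · right; exact Finset.prod_eq_one h
    · left
      push_neg at h
      obtain ⟨i, hi, hne⟩ := h
      exact Finset.prod_eq_zero hi ((hval i ω).resolve_right hne)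
  have hPmeas : ∀ A, Measurable (P A) := fun A => Finset.measurable_prod A (fun i _ => hmeas i)
  have hPint : ∀ A, Integrable (P A) μ := by
    intro A
    refine ⟨(hPmeas A).aestronglyMeasurable, HasFiniteIntegral.of_bounded (C := 1) ?_⟩
    filter_upwards with ω
    rcases hPval A ω with h | h <;> simp [h]
  have hPexp : ∀ A : Finset (Fin N), ∫ ω, P A ω ∂μ = p ^ A.card := by
    intro A
    induction A using Finset.cons_induction with
    | empty => simp [hP]
    | cons a A ha ih =>
      have hfun : (∏ j ∈ A, X j) = P A := by
        funext ω; simp [hP, Finset.prod_apply]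
      have h2 : IndepFun (∏ j ∈ A, X j) (X a) μ :=
        hindep.indepFun_finsetProd_of_notMem hmeas ha
      have h3 : ∫ ω, ((∏ j ∈ A, X j) * X a) ω ∂μ
          = (∫ ω, (∏ j ∈ A, X j) ω ∂μ) * ∫ ω, X a ω ∂μ :=
        h2.integral_mul_eq_mul_integral (hfun ▸ hPint A).aestronglyMeasurable (hXint a).aestronglyMeasurable
      calc ∫ ω, P (Finset.cons a A ha) ω ∂μ
          = ∫ ω, ((∏ j ∈ A, X j) * X a) ω ∂μ := by
            refine integral_congr_ae (Filter.Eventually.of_forall fun ω => ?_)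
            simp [hP, Finset.prod_cons, Finset.prod_apply, Finset.prod_insert ha, mul_comm]
        _ = (∫ ω, (∏ j ∈ A, X j) ω ∂μ) * ∫ ω, X a ω ∂μ := h3
        _ = p ^ A.card * p := by rw [hfun, ih, hid a]
        _ = p ^ (Finset.cons a A ha).card := by
            rw [Finset.card_cons, pow_succ]
  have hpoint : ∀ ω, (∑ i, X i ω) ^ k
      ≤ (k : ℝ) ^ k * ∑ r ∈ Finset.Icc 1 k,
          ∑ A ∈ Finset.powersetCard r (Finset.univ : Finset (Fin N)), P A ω := by
    intro ω
    set ones := Finset.univ.filter (fun i => X i ω = 1) with hones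
    have hsum : ∑ i, X i ω = (ones.card : ℝ) := by
      rw [hones, Finset.card_filter]
      push_cast
      refine Finset.sum_congr rfl fun i _ => ?_
      rcases hval i ω with h | h <;> simp [h]
    have hPA : ∀ A, P A ω = if A ⊆ ones then (1 : ℝ) else 0 := by
      intro A
      by_cases hsub : A ⊆ ones
      · rw [if_pos hsub]
        refine Finset.prod_eq_one fun i hi => ?_
        have := hsub hi
        rw [hones, Finset.mem_filter] at this
        exact this.2
      · rw [if_neg hsub]
        rw [Finset.subset_iff] at hsub; push_neg at hsub
        obtain ⟨i, hi, hni⟩ := hsub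
        refine Finset.prod_eq_zero hi ?_
        rcases hval i ω with h | h
        · exact h
        · exact absurd (by rw [hones, Finset.mem_filter]; exact ⟨Finset.mem_univ i, h⟩) hni
    have hinner : ∀ r, ∑ A ∈ Finset.powersetCard r (Finset.univ : Finset (Fin N)), P A ω
        = (ones.card.choose r : ℝ) := by
      intro r
      rw [Finset.sum_congr rfl fun A _ => hPA A, Finset.sum_boole]
      congr 1
      have hfil : (Finset.powersetCard r (Finset.univ : Finset (Fin N))).filter (· ⊆ ones)
          = Finset.powersetCard r ones := by
        ext A
        simp only [Finset.mem_filter, Finset.mem_powersetCard, Finset.subset_univ, true_and]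
        tauto
      rw [hfil, Finset.card_powersetCard]
    rw [hsum, Finset.sum_congr rfl fun r _ => hinner r]
    exact_mod_cast pow_le_sum_choose hk
  have hSint : Integrable (fun ω => (∑ i, X i ω) ^ k) μ := by
    refine ⟨((Finset.measurable_sum _ fun i _ => hmeas i).pow_const k).aestronglyMeasurable,
      HasFiniteIntegral.of_bounded (C := (N : ℝ) ^ k) ?_⟩
    filter_upwards with ω
    have h1 : 0 ≤ ∑ i, X i ω := Finset.sum_nonneg fun i _ => (hX01 i ω).1
    have h2 : ∑ i, X i ω ≤ N := by
      calc ∑ i, X i ω ≤ ∑ _i : Fin N, (1 : ℝ) := Finset.sum_le_sum fun i _ => (hX01 i ω).2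
        _ = N := by simp
    rw [Real.norm_eq_abs, abs_of_nonneg (pow_nonneg h1 k)]
    exact pow_le_pow_left₀ h1 h2 k
  have hRint : Integrable (fun ω => (k : ℝ) ^ k * ∑ r ∈ Finset.Icc 1 k,
      ∑ A ∈ Finset.powersetCard r (Finset.univ : Finset (Fin N)), P A ω) μ :=
    (integrable_finset_sum _ fun r _ => integrable_finset_sum _ fun A _ => hPint A).const_mul _
  have step1 : ∫ ω, (∑ i, X i ω) ^ k ∂μ
      ≤ ∫ ω, (k : ℝ) ^ k * ∑ r ∈ Finset.Icc 1 k,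
          ∑ A ∈ Finset.powersetCard r (Finset.univ : Finset (Fin N)), P A ω ∂μ :=
    integral_mono hSint hRint hpoint
  have step2 : ∫ ω, (k : ℝ) ^ k * ∑ r ∈ Finset.Icc 1 k,
      ∑ A ∈ Finset.powersetCard r (Finset.univ : Finset (Fin N)), P A ω ∂μ
      = (k : ℝ) ^ k * ∑ r ∈ Finset.Icc 1 k, (N.choose r : ℝ) * p ^ r := by
    rw [integral_const_mul, integral_finset_sum _ fun r _ =>
      integrable_finset_sum _ fun A _ => hPint A]
    congr 1
    refine Finset.sum_congr rfl fun r _ => ?_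
    rw [integral_finset_sum _ fun A _ => hPint A]
    rw [Finset.sum_congr rfl fun A hA => ?_]
    · rw [Finset.sum_const, Finset.card_powersetCard, Finset.card_univ, Fintype.card_fin,
        nsmul_eq_mul]
    · rw [hPexp A, (Finset.mem_powersetCard.mp hA).2]
  set E := Real.exp (n * (α - β)) with hE
  have hE0 : 0 ≤ E := (Real.exp_pos _).le
  have hE1 : E ≤ 1 := by
    rw [hE, Real.exp_le_one_iff]
    have : α - β ≤ 0 := by linarith
    exact mul_nonpos_of_nonneg_of_nonpos (Nat.cast_nonneg n) this
  have hNp : (N : ℝ) * p ≤ E := by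
    have hNle : (N : ℝ) ≤ Real.exp (n * α) := by
      rw [hN]; exact Nat.floor_le (Real.exp_pos _).le
    calc (N : ℝ) * p ≤ Real.exp (n * α) * Real.exp (-(n * β)) :=
          mul_le_mul hNle hmean hp0 (Real.exp_pos _).le
      _ = E := by rw [hE, ← Real.exp_add]; ring_nf
  have hterm : ∀ r ∈ Finset.Icc 1 k, (N.choose r : ℝ) * p ^ r ≤ E := by
    intro r hr
    rw [Finset.mem_Icc] at hr
    have h1 : (N.choose r : ℝ) ≤ (N : ℝ) ^ r := by exact_mod_cast Nat.choose_le_pow N r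
    calc (N.choose r : ℝ) * p ^ r ≤ (N : ℝ) ^ r * p ^ r :=
          mul_le_mul_of_nonneg_right h1 (pow_nonneg hp0 r)
      _ = ((N : ℝ) * p) ^ r := (mul_pow _ _ _).symm
      _ ≤ E ^ r := pow_le_pow_left₀ (mul_nonneg (Nat.cast_nonneg N) hp0) hNp r
      _ ≤ E ^ 1 := pow_le_pow_of_le_one hE0 hE1 hr.1
      _ = E := pow_one E
  have hsumle : ∑ r ∈ Finset.Icc 1 k, (N.choose r : ℝ) * p ^ r ≤ (k : ℝ) * E := by
    calc ∑ r ∈ Finset.Icc 1 k, (N.choose r : ℝ) * p ^ r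
        ≤ (Finset.Icc 1 k).card • E := Finset.sum_le_card_nsmul _ _ _ hterm
      _ = (k : ℝ) * E := by rw [Nat.card_Icc]; simp [nsmul_eq_mul]
  have hkk : (k : ℝ) ^ k ≤ ((Nat.factorial k : ℝ)) ^ 2 := by
    exact_mod_cast pow_self_le_factorial_sq k
  calc ∫ ω, (∑ i, X i ω) ^ k ∂μ
      ≤ (k : ℝ) ^ k * ∑ r ∈ Finset.Icc 1 k, (N.choose r : ℝ) * p ^ r := step2 ▸ step1
    _ ≤ (k : ℝ) ^ k * ((k : ℝ) * E) :=
        mul_le_mul_of_nonneg_left hsumle (by positivity)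
    _ ≤ ((Nat.factorial k : ℝ)) ^ 2 * ((k : ℝ) * E) :=
        mul_le_mul_of_nonneg_right hkk (by positivity)
    _ = ((Nat.factorial k : ℝ)) ^ 2 * (k : ℝ) * E := by ring
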